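/- Let X be an unconditional log-concave random vector in R^n (the law of (ε_1 X_1,...,ε_n X_n) equals that of X for all sign choices ε_i ∈ {−1,1}). Then for any 1 ≤ k ≤ n, u > 1 and t > 0: P(k-max_{i≤n}|X_i| ≥ u·t) ≤ P(k-max_{i≤n}|X_i| ≥ t)^u, where k-max denotes the k-th largest value. -/

import Mathlib

open MeasureTheory Finset Pointwise
open ENNReal

noncomputable def maxKSum {n : ℕ} (k : ℕ) (x : Fin n → ℝ) : ℝ :=
  sSup {y | ∃ I : Finset (Fin n), I.card = k ∧ y = ∑ i ∈ I, |x i|}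

noncomputable def kthMax {n : ℕ} (k : ℕ) (x : Fin n → ℝ) : ℝ :=
  sSup {t : ℝ | k ≤ (Finset.univ.filter (fun i => t ≤ |x i|)).card}

noncomputable def tk {Ω : Type*} [MeasurableSpace Ω] (μ : Measure Ω) {n : ℕ}
    (X : Fin n → Ω → ℝ) (k : ℝ) : ℝ :=
  sInf {t : ℝ | 0 < t ∧ ∑ i, ∫ ω in {ω | t ≤ |X i ω|}, |X i ω| ∂μ ≤ k * t}

noncomputable def tstar {Ω : Type*} [MeasurableSpace Ω] (μ : Measure Ω) {n : ℕ}
    (X : Fin n → Ω → ℝ) (p : ℝ) : ℝ :=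
  sInf {t : ℝ | 0 < t ∧ ∑ i, (μ {ω | t ≤ |X i ω|}).toReal ≤ p}

def IsLogConcave {E : Type*} [AddCommGroup E] [Module ℝ E] [TopologicalSpace E]
    [MeasurableSpace E] (ν : Measure E) : Prop :=
  ∀ (K L : Set E) (l : ℝ), IsCompact K → IsCompact L → K.Nonempty → L.Nonempty →
    l ∈ Set.Icc (0 : ℝ) 1 → ν K ^ l * ν L ^ (1 - l) ≤ ν (l • K + (1 - l) • L)

noncomputable def med {Ω : Type*} [MeasurableSpace Ω] (μ : Measure Ω) (f : Ω → ℝ) : ℝ :=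
  sInf {t : ℝ | (1 : ℝ) / 2 ≤ (μ {ω | f ω ≤ t}).toReal}

noncomputable def kthMaxOn {n : ℕ} (J : Finset (Fin n)) (k : ℕ) (x : Fin n → ℝ) : ℝ :=
  sSup {t : ℝ | k ≤ (J.filter (fun i => t ≤ |x i|)).card}

lemma mem_S_iff {n k : ℕ} (x : Fin n → ℝ) (s : ℝ) :
    k ≤ (Finset.univ.filter (fun i => s ≤ |x i|)).card ↔
      ∃ I ∈ Finset.univ.powersetCard k, ∀ i ∈ I, s ≤ |x i| := by
  constructor
  · intro h
    obtain ⟨I, hIsub, hIcard⟩ := Finset.exists_subset_card_eq h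
    exact ⟨I, Finset.mem_powersetCard.2 ⟨Finset.subset_univ _, hIcard⟩,
      fun i hi => (Finset.mem_filter.1 (hIsub hi)).2⟩
  · rintro ⟨I, hI, hall⟩
    obtain ⟨-, hcard⟩ := Finset.mem_powersetCard.1 hI
    calc k = I.card := hcard.symm
    _ ≤ _ := Finset.card_le_card fun i hi => Finset.mem_filter.2 ⟨Finset.mem_univ _, hall i hi⟩

lemma kthMax_ge_iff {n k : ℕ} (hk1 : 1 ≤ k) (hkn : k ≤ n) (x : Fin n → ℝ) (s : ℝ) :
    s ≤ kthMax k x ↔ k ≤ (Finset.univ.filter (fun i => s ≤ |x i|)).card := by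
  classical
  have hpne : ((Finset.univ : Finset (Fin n)).powersetCard k).Nonempty :=
    Finset.powersetCard_nonempty.2 (by simpa using hkn)
  have hIne : ∀ I ∈ (Finset.univ : Finset (Fin n)).powersetCard k,
      (I.image fun i => |x i|).Nonempty := by
    intro I hI
    obtain ⟨-, hcard⟩ := Finset.mem_powersetCard.1 hI
    exact Finset.image_nonempty.2 (Finset.card_pos.1 (hcard ▸ hk1))
  -- value of each I
  set c : Finset (Fin n) → ℝ := fun I =>
    if h : I ∈ (Finset.univ : Finset (Fin n)).powersetCard k
    then (I.image fun i => |x i|).min' (hIne I h) else 0 with hc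
  have hmemc : ∀ I (hI : I ∈ (Finset.univ : Finset (Fin n)).powersetCard k) (s : ℝ),
      (∀ i ∈ I, s ≤ |x i|) ↔ s ≤ c I := by
    intro I hI s
    rw [hc]; simp only [dif_pos hI]
    constructor
    · intro h
      exact Finset.le_min' _ _ _ (by simpa using fun i hi => h i hi)
    · intro h i hi
      exact le_trans h (Finset.min'_le _ _ (Finset.mem_image_of_mem _ hi))
  set M : ℝ := (((Finset.univ : Finset (Fin n)).powersetCard k).image c).max'
    (Finset.image_nonempty.2 hpne) with hM
  have hSet : {t : ℝ | k ≤ (Finset.univ.filter (fun i => t ≤ |x i|)).card} = Set.Iic M := by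
    ext t
    simp only [Set.mem_setOf_eq, Set.mem_Iic]
    rw [mem_S_iff]
    constructor
    · rintro ⟨I, hI, hall⟩
      exact le_trans ((hmemc I hI t).1 hall)
        (Finset.le_max' _ _ (Finset.mem_image_of_mem _ hI))
    · intro ht
      have hmm := Finset.max'_mem (((Finset.univ : Finset (Fin n)).powersetCard k).image c)
        (Finset.image_nonempty.2 hpne)
      obtain ⟨I, hI, hcI⟩ := Finset.mem_image.1 hmm
      exact ⟨I, hI, (hmemc I hI t).2 (hcI.symm ▸ ht)⟩
  rw [kthMax, hSet, csSup_Iic, ← Set.mem_Iic, ← hSet]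
  rfl

lemma measurable_card_set {n k : ℕ} (s : ℝ) :
    MeasurableSet {x : Fin n → ℝ | k ≤ (Finset.univ.filter (fun i => s ≤ |x i|)).card} := by
  classical
  have : {x : Fin n → ℝ | k ≤ (Finset.univ.filter (fun i => s ≤ |x i|)).card} =
      ⋃ I ∈ (Finset.univ : Finset (Fin n)).powersetCard k, ⋂ i ∈ I, {x | s ≤ |x i|} := by
    ext x
    simp only [Set.mem_setOf_eq, Set.mem_iUnion, Set.mem_iInter]
    constructor
    · intro h
      obtain ⟨I, hIsub, hIcard⟩ := Finset.exists_subset_card_eq h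
      exact ⟨I, Finset.mem_powersetCard.2 ⟨Finset.subset_univ _, hIcard⟩,
        fun i hi => (Finset.mem_filter.1 (hIsub hi)).2⟩
    · rintro ⟨I, hI, hall⟩
      obtain ⟨-, hcard⟩ := Finset.mem_powersetCard.1 hI
      calc k = I.card := hcard.symm
      _ ≤ _ := Finset.card_le_card fun i hi => Finset.mem_filter.2 ⟨Finset.mem_univ _, hall i hi⟩
  rw [this]
  refine MeasurableSet.biUnion (Finset.countable_toSet _) fun I _ =>
    MeasurableSet.biInter (Finset.countable_toSet _) fun i _ => ?_
  exact measurableSet_le measurable_const (measurable_pi_apply i).abs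

/-- The key log-concavity consequence, in real form. -/
lemma lc_real {n : ℕ} (ν : Measure (Fin n → ℝ)) [IsProbabilityMeasure ν]
    (hlc : ∀ (K L : Set (Fin n → ℝ)) (l : ℝ), IsCompact K → IsCompact L →
      K.Nonempty → L.Nonempty → l ∈ Set.Icc (0 : ℝ) 1 →
      ν K ^ l * ν L ^ (1 - l) ≤ ν (l • K + (1 - l) • L))
    {A B S : Set (Fin n → ℝ)} (hA : MeasurableSet A) (hB : MeasurableSet B)
    {l : ℝ} (hl0 : 0 < l) (hl1 : l < 1)
    (hsum : ∀ x ∈ A, ∀ y ∈ B, l • x + (1 - l) • y ∈ S) :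
    (ν A).toReal ^ l * (ν B).toReal ^ (1 - l) ≤ (ν S).toReal := by
  set a := (ν A).toReal with ha
  set b := (ν B).toReal with hb
  rcases eq_or_lt_of_le (ENNReal.toReal_nonneg : 0 ≤ a) with h0 | hapos
  · rw [show a = 0 from h0.symm, Real.zero_rpow (ne_of_gt hl0), zero_mul]
    exact ENNReal.toReal_nonneg
  rcases eq_or_lt_of_le (ENNReal.toReal_nonneg : 0 ≤ b) with h0 | hbpos
  · rw [show b = 0 from h0.symm, Real.zero_rpow (by intro h; linarith), mul_zero]
    exact ENNReal.toReal_nonneg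
  have key : ∀ ε : ℝ, 0 < ε → ε < a → ε < b →
      (a - ε) ^ l * (b - ε) ^ (1 - l) ≤ (ν S).toReal := by
    intro ε hε hεa hεb
    have hεne : (ENNReal.ofReal ε) ≠ 0 := by
      simpa using ENNReal.ofReal_pos.2 hε |>.ne'
    obtain ⟨K, hKA, hKc, hKlt⟩ := hA.exists_isCompact_lt_add (measure_ne_top ν A) hεne
    obtain ⟨L, hLB, hLc, hLlt⟩ := hB.exists_isCompact_lt_add (measure_ne_top ν B) hεne
    have hKr : a - ε ≤ (ν K).toReal := by
      have := ENNReal.toReal_le_toReal (measure_ne_top ν A) (by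
        exact ENNReal.add_ne_top.2 ⟨measure_ne_top ν K, ENNReal.ofReal_ne_top⟩) |>.2 hKlt.le
      rw [ENNReal.toReal_add (measure_ne_top ν K) ENNReal.ofReal_ne_top,
        ENNReal.toReal_ofReal hε.le] at this
      linarith
    have hLr : b - ε ≤ (ν L).toReal := by
      have := ENNReal.toReal_le_toReal (measure_ne_top ν B) (by
        exact ENNReal.add_ne_top.2 ⟨measure_ne_top ν L, ENNReal.ofReal_ne_top⟩) |>.2 hLlt.le
      rw [ENNReal.toReal_add (measure_ne_top ν L) ENNReal.ofReal_ne_top,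
        ENNReal.toReal_ofReal hε.le] at this
      linarith
    have hKne : K.Nonempty := by
      rcases Set.eq_empty_or_nonempty K with rfl | h
      · exfalso; rw [measure_empty] at hKr; simp at hKr; linarith
      · exact h
    have hLne : L.Nonempty := by
      rcases Set.eq_empty_or_nonempty L with rfl | h
      · exfalso; rw [measure_empty] at hLr; simp at hLr; linarith
      · exact h
    have hmain := hlc K L l hKc hLc hKne hLne ⟨hl0.le, hl1.le⟩
    have hsub : l • K + (1 - l) • L ⊆ S := by
      rintro z hz
      rw [Set.mem_add] at hz
      obtain ⟨p, hp, q, hq, rfl⟩ := hz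
      obtain ⟨x, hx, rfl⟩ := hp
      obtain ⟨y, hy, rfl⟩ := hq
      exact hsum x (hKA hx) y (hLB hy)
    have hle : ν K ^ l * ν L ^ (1 - l) ≤ ν S := le_trans hmain (measure_mono hsub)
    have hfin : ν K ^ l * ν L ^ (1 - l) ≠ ⊤ := by
      apply ENNReal.mul_ne_top
      · exact ENNReal.rpow_ne_top_of_nonneg hl0.le (measure_ne_top ν K)
      · exact ENNReal.rpow_ne_top_of_nonneg (by linarith) (measure_ne_top ν L)
    have := (ENNReal.toReal_le_toReal hfin (measure_ne_top ν S)).2 hle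
    rw [ENNReal.toReal_mul, ← ENNReal.toReal_rpow, ← ENNReal.toReal_rpow] at this
    refine le_trans ?_ this
    apply mul_le_mul
    · exact Real.rpow_le_rpow (by linarith) hKr hl0.le
    · exact Real.rpow_le_rpow (by linarith) hLr (by linarith)
    · exact Real.rpow_nonneg (by linarith) _
    · exact Real.rpow_nonneg ENNReal.toReal_nonneg _
  -- pass to the limit ε → 0⁺
  have htend : Filter.Tendsto (fun ε : ℝ => (a - ε) ^ l * (b - ε) ^ (1 - l))
      (nhdsWithin 0 (Set.Ioi 0)) (nhds (a ^ l * b ^ (1 - l))) := by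
    apply Filter.Tendsto.mono_left _ nhdsWithin_le_nhds
    have h1 : ContinuousAt (fun ε : ℝ => (a - ε) ^ l) 0 := by
      have := (Real.continuousAt_rpow_const (a - 0) l (Or.inl (by simp; linarith))).comp
        (continuousAt_const.sub continuousAt_id)
      simpa [Function.comp_def] using this
    have h2 : ContinuousAt (fun ε : ℝ => (b - ε) ^ (1 - l)) 0 := by
      have := (Real.continuousAt_rpow_const (b - 0) (1 - l) (Or.inl (by simp; linarith))).comp
        (continuousAt_const.sub continuousAt_id)
      simpa [Function.comp_def] using this
    have h3 := (h1.mul h2).tendsto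
    simpa [Pi.mul_def] using h3
  refine le_of_tendsto htend ?_
  filter_upwards [Ioo_mem_nhdsGT_of_mem (by constructor <;> [rfl; exact lt_min hapos hbpos] :
    (0:ℝ) ∈ Set.Ico 0 (min a b))] with ε hε
  exact key ε hε.1 (lt_of_lt_of_le hε.2 (min_le_left _ _)) (lt_of_lt_of_le hε.2 (min_le_right _ _))

lemma dichotomy {n : ℕ} (ν : Measure (Fin n → ℝ)) [IsProbabilityMeasure ν]
    (hlc : ∀ (K L : Set (Fin n → ℝ)) (l : ℝ), IsCompact K → IsCompact L →
      K.Nonempty → L.Nonempty → l ∈ Set.Icc (0 : ℝ) 1 →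
      ν K ^ l * ν L ^ (1 - l) ≤ ν (l • K + (1 - l) • L))
    (hsymm : ∀ ε : Fin n → ℝ, (∀ i, ε i = 1 ∨ ε i = -1) → ∀ S : Set (Fin n → ℝ),
      MeasurableSet S → ν ((fun x i => ε i * x i) ⁻¹' S) = ν S)
    (i : Fin n) (hne : ν {x | x i ≠ 0} ≠ 0) : ν {x | x i = 0} = 0 := by
  classical
  have hmeas_lt : MeasurableSet {x : Fin n → ℝ | x i < 0} :=
    measurableSet_lt (measurable_pi_apply i) measurable_const
  have hmeas_gt : MeasurableSet {x : Fin n → ℝ | 0 < x i} :=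
    measurableSet_lt measurable_const (measurable_pi_apply i)
  have hmeas_ge : MeasurableSet {x : Fin n → ℝ | 0 ≤ x i} :=
    measurableSet_le measurable_const (measurable_pi_apply i)
  have hmeas_eq : MeasurableSet {x : Fin n → ℝ | x i = 0} :=
    (measurable_pi_apply i) (measurableSet_singleton 0)
  -- symmetry : ν {x i < 0} = ν {0 < x i}
  set σ : Fin n → ℝ := fun j => if j = i then -1 else 1 with hσdef
  have hσ : ∀ j, σ j = 1 ∨ σ j = -1 := by
    intro j; by_cases h : j = i <;> simp [hσdef, h]
  have hflip : ν {x | x i < 0} = ν {x | 0 < x i} := by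
    have h := hsymm σ hσ _ hmeas_gt
    have hpre : (fun (x : Fin n → ℝ) j => σ j * x j) ⁻¹' {x | 0 < x i} = {x | x i < 0} := by
      ext x
      simp [hσdef]
    rwa [hpre] at h
  -- ν {0 < x i} ≠ 0
  have hpos : ν {x | 0 < x i} ≠ 0 := by
    intro h0
    apply hne
    have hsub : {x : Fin n → ℝ | x i ≠ 0} ⊆ {x | x i < 0} ∪ {x | 0 < x i} := by
      intro x hx
      rcases lt_or_gt_of_ne hx with h | h
      · exact Or.inl h
      · exact Or.inr h
    have := measure_union_le (μ := ν) {x : Fin n → ℝ | x i < 0} {x | 0 < x i}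
    rw [hflip, h0, add_zero] at this
    exact le_antisymm (le_trans (measure_mono hsub) this) zero_le
  -- find s > 0 with ν {s ≤ x i} ≠ 0
  obtain ⟨s, hs, hsne⟩ : ∃ s : ℝ, 0 < s ∧ ν {x | s ≤ x i} ≠ 0 := by
    by_contra hcon
    push_neg at hcon
    apply hpos
    have hsub : {x : Fin n → ℝ | 0 < x i} ⊆ ⋃ m : ℕ, {x | 1 / (m + 1 : ℝ) ≤ x i} := by
      intro x hx
      have hx' : (0:ℝ) < x i := hx
      obtain ⟨m, hm⟩ := exists_nat_one_div_lt hx'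
      exact Set.mem_iUnion.2 ⟨m, hm.le⟩
    have hnull : ν (⋃ m : ℕ, {x : Fin n → ℝ | 1 / (m + 1 : ℝ) ≤ x i}) = 0 :=
      measure_iUnion_null fun m => hcon _ (by positivity)
    exact le_antisymm (le_trans (measure_mono hsub) (le_of_eq hnull)) zero_le
  by_cases hge0 : ν {x | 0 ≤ x i} = 0
  · exact le_antisymm (le_trans (measure_mono (fun x hx => le_of_eq (hx : x i = 0).symm))
      (le_of_eq hge0)) zero_le
  set a0 := (ν {x | 0 ≤ x i}).toReal with ha0def
  set c := (ν {x | s ≤ x i}).toReal with hcdef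
  set w := (ν {x | 0 < x i}).toReal with hwdef
  have ha0 : 0 < a0 := ENNReal.toReal_pos hge0 (measure_ne_top _ _)
  have hc : 0 < c := ENNReal.toReal_pos hsne (measure_ne_top _ _)
  have key : ∀ l : ℝ, 0 < l → l < 1 → a0 ^ l * c ^ (1 - l) ≤ w := by
    intro l hl0 hl1
    apply lc_real ν hlc hmeas_ge (measurableSet_le measurable_const (measurable_pi_apply i))
      hl0 hl1
    intro x hx y hy
    have : (l • x + (1 - l) • y) i = l * x i + (1 - l) * y i := by
      simp [smul_eq_mul]
    show 0 < (l • x + (1 - l) • y) i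
    rw [this]
    have h1 : 0 ≤ l * x i := mul_nonneg hl0.le hx
    have h2 : (0:ℝ) < (1 - l) * y i := mul_pos (by linarith) (lt_of_lt_of_le hs hy)
    linarith
  -- limit l → 1⁻
  have hlim : a0 ≤ w := by
    have htend : Filter.Tendsto (fun m : ℕ => a0 ^ (1 - 1 / (m + 1 : ℝ)) * c ^ (1 / (m + 1 : ℝ)))
        Filter.atTop (nhds a0) := by
      have h1 : ContinuousAt (fun r : ℝ => a0 ^ (1 - r) * c ^ r) 0 := by
        exact ((Real.continuousAt_const_rpow ha0.ne').comp
          (continuousAt_const.sub continuousAt_id)).mul (Real.continuousAt_const_rpow hc.ne')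
      have h2 := h1.tendsto.comp tendsto_one_div_add_atTop_nhds_zero_nat
      simpa [Real.rpow_natCast, Function.comp_def] using h2
    refine le_of_tendsto htend ?_
    filter_upwards [Filter.eventually_ge_atTop 1] with m hm
    have hml : (0:ℝ) < 1 / (m + 1 : ℝ) := by positivity
    have hml1 : 1 / (m + 1 : ℝ) < 1 := by
      rw [div_lt_one (by positivity)]
      have : (1:ℝ) ≤ (m:ℝ) := by exact_mod_cast hm
      linarith
    have hk := key (1 - 1 / (m + 1 : ℝ)) (by linarith) (by linarith)
    have he : (1 : ℝ) - (1 - 1 / (m + 1 : ℝ)) = 1 / (m + 1 : ℝ) := by ring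
    rwa [he] at hk
  -- conclude
  have hsplit : ν {x : Fin n → ℝ | 0 ≤ x i} = ν {x | 0 < x i} + ν {x | x i = 0} := by
    have hd : Disjoint {x : Fin n → ℝ | 0 < x i} {x | x i = 0} := by
      rw [Set.disjoint_left]
      intro x hx hx'
      exact absurd (hx' : x i = 0) (ne_of_gt hx)
    have hu : {x : Fin n → ℝ | 0 ≤ x i} = {x | 0 < x i} ∪ {x | x i = 0} := by
      ext x
      simp only [Set.mem_setOf_eq, Set.mem_union]
      constructor
      · intro h; rcases eq_or_lt_of_le h with h | h
        · exact Or.inr h.symm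
        · exact Or.inl h
      · rintro (h | h)
        · exact h.le
        · exact h.ge
    rw [hu, measure_union hd hmeas_eq]
  have hq : (ν {x : Fin n → ℝ | x i = 0}).toReal ≤ 0 := by
    have := congrArg ENNReal.toReal hsplit
    rw [ENNReal.toReal_add (measure_ne_top _ _) (measure_ne_top _ _)] at this
    rw [← ha0def, ← hwdef] at this
    linarith
  have h0 : (ν {x : Fin n → ℝ | x i = 0}).toReal = 0 := le_antisymm hq ENNReal.toReal_nonneg
  exact ((ENNReal.toReal_eq_zero_iff _).1 h0).resolve_right (measure_ne_top _ _)

lemma kthMax_uncond {n k : ℕ} (σ : Fin n → ℝ) (hσ : ∀ i, |σ i| = 1) (x : Fin n → ℝ) :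
    kthMax k (fun i => σ i * x i) = kthMax k x := by
  unfold kthMax
  congr 1
  ext t
  simp only [Set.mem_setOf_eq, abs_mul, hσ, one_mul]

theorem stmt_11 {Ω : Type*} [MeasurableSpace Ω] (μ : Measure Ω) [IsProbabilityMeasure μ]
    {n k : ℕ} (hk1 : 1 ≤ k) (hkn : k ≤ n) (X : Ω → Fin n → ℝ) (hmeas : Measurable X)
    (hlc : IsLogConcave (μ.map X))
    (huncond : ∀ ε : Fin n → ℝ, (∀ i, ε i = 1 ∨ ε i = -1) →
      μ.map (fun ω i => ε i * X ω i) = μ.map X) :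
    ∀ u t : ℝ, 1 < u → 0 < t →
      (μ {ω | u * t ≤ kthMax k (X ω)}).toReal ≤
        (μ {ω | t ≤ kthMax k (X ω)}).toReal ^ u := by
  classical
  intro u t hu ht
  have hu0 : (0:ℝ) < u := by linarith
  set ν := μ.map X with hνdef
  haveI : IsProbabilityMeasure ν := Measure.isProbabilityMeasure_map hmeas.aemeasurable
  -- symmetry of ν
  have hsymm : ∀ ε : Fin n → ℝ, (∀ i, ε i = 1 ∨ ε i = -1) → ∀ S : Set (Fin n → ℝ),
      MeasurableSet S → ν ((fun x i => ε i * x i) ⁻¹' S) = ν S := by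
    intro ε hε S hS
    have hem : Measurable (fun x : Fin n → ℝ => fun i => ε i * x i) :=
      measurable_pi_lambda _ fun i => measurable_const.mul (measurable_pi_apply i)
    calc ν ((fun x i => ε i * x i) ⁻¹' S)
        = μ (X ⁻¹' ((fun x i => ε i * x i) ⁻¹' S)) := Measure.map_apply hmeas (hem hS)
      _ = μ.map (fun ω i => ε i * X ω i) S := by
          exact (Measure.map_apply (hem.comp hmeas) hS).symm
      _ = ν S := by rw [huncond ε hε]
  -- the sets B_s
  set Bs : ℝ → Set (Fin n → ℝ) := fun s => {x | s ≤ kthMax k x} with hBsdef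
  have hBs_eq : ∀ s, Bs s = {x : Fin n → ℝ | k ≤ (Finset.univ.filter (fun i => s ≤ |x i|)).card} := by
    intro s; ext x; exact kthMax_ge_iff hk1 hkn x s
  have hBs_meas : ∀ s, MeasurableSet (Bs s) := fun s => (hBs_eq s) ▸ measurable_card_set s
  -- coordinates
  have hcoord_meas : ∀ i : Fin n, MeasurableSet {x : Fin n → ℝ | x i = 0} :=
    fun i => (measurable_pi_apply i) (measurableSet_singleton 0)
  have hcoord_meas' : ∀ i : Fin n, MeasurableSet {x : Fin n → ℝ | x i ≠ 0} := by
    intro i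
    have : {x : Fin n → ℝ | x i ≠ 0} = {x : Fin n → ℝ | x i = 0}ᶜ := rfl
    rw [this]; exact (hcoord_meas i).compl
  set T : Finset (Fin n) := Finset.univ.filter (fun i => ν {x | x i ≠ 0} ≠ 0) with hTdef
  have hnullT : ∀ i ∈ T, ν {x | x i = 0} = 0 := by
    intro i hi
    exact dichotomy ν hlc hsymm i (Finset.mem_filter.1 hi).2
  have hnullNT : ∀ i ∉ T, ν {x | x i ≠ 0} = 0 := by
    intro i hi
    by_contra h
    exact hi (Finset.mem_filter.2 ⟨Finset.mem_univ _, h⟩)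
  -- the orthant pieces
  set Pσ : (Fin n → ℝ) → Set (Fin n → ℝ) := fun σ =>
    ⋂ i, (if i ∈ T then {x | 0 < σ i * x i} else {x : Fin n → ℝ | x i = 0}) with hPσdef
  have hPσ_mem : ∀ σ x, x ∈ Pσ σ ↔ ∀ i, (i ∈ T → 0 < σ i * x i) ∧ (i ∉ T → x i = 0) := by
    intro σ x
    rw [hPσdef]
    simp only [Set.mem_iInter]
    constructor
    · intro h i
      constructor
      · intro hi; have := h i; rwa [if_pos hi] at this
      · intro hi; have := h i; rwa [if_neg hi] at this
    · intro h i
      by_cases hi : i ∈ T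
      · rw [if_pos hi]; exact (h i).1 hi
      · rw [if_neg hi]; exact (h i).2 hi
  have hPσ_meas : ∀ σ, MeasurableSet (Pσ σ) := by
    intro σ
    apply MeasurableSet.iInter
    intro i
    by_cases hi : i ∈ T
    · rw [if_pos hi]
      exact measurableSet_lt measurable_const (measurable_const.mul (measurable_pi_apply i))
    · rw [if_neg hi]
      exact hcoord_meas i
  set σS : Finset (Fin n) → (Fin n → ℝ) := fun S i => if i ∈ S then -1 else 1 with hσSdef
  have hσS_sign : ∀ S i, σS S i = 1 ∨ σS S i = -1 := by
    intro S i; by_cases h : i ∈ S <;> simp [hσSdef, h]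
  have hσS_ne : ∀ S i, σS S i ≠ 0 := by
    intro S i; rcases hσS_sign S i with h | h <;> rw [h] <;> norm_num
  set σ0 : Fin n → ℝ := fun _ => 1 with hσ0def
  -- G and its complement
  set G : Set (Fin n → ℝ) := {x | ∀ i, (i ∈ T → x i ≠ 0) ∧ (i ∉ T → x i = 0)} with hGdef
  have hG_meas : MeasurableSet G := by
    have : G = ⋂ i, (if i ∈ T then {x : Fin n → ℝ | x i ≠ 0} else {x : Fin n → ℝ | x i = 0}) := by
      ext x
      simp only [hGdef, Set.mem_setOf_eq, Set.mem_iInter]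
      constructor
      · intro h i
        by_cases hi : i ∈ T
        · rw [if_pos hi]; exact (h i).1 hi
        · rw [if_neg hi]; exact (h i).2 hi
      · intro h i
        constructor
        · intro hi; have := h i; rwa [if_pos hi] at this
        · intro hi; have := h i; rwa [if_neg hi] at this
    rw [this]
    apply MeasurableSet.iInter
    intro i
    by_cases hi : i ∈ T
    · rw [if_pos hi]; exact hcoord_meas' i
    · rw [if_neg hi]; exact hcoord_meas i
  have hGc : ν Gᶜ = 0 := by
    have hsub : Gᶜ ⊆ ⋃ i, (if i ∈ T then {x : Fin n → ℝ | x i = 0} else {x : Fin n → ℝ | x i ≠ 0}) := by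
      intro x hx
      simp only [hGdef, Set.mem_compl_iff, Set.mem_setOf_eq] at hx
      push_neg at hx
      obtain ⟨i, hi⟩ := hx
      apply Set.mem_iUnion.2
      refine ⟨i, ?_⟩
      by_cases hiT : i ∈ T
      · rw [if_pos hiT]
        by_contra hx0
        exact (hi (fun _ => hx0)).1 hiT
      · rw [if_neg hiT]
        exact (hi (fun h => absurd h hiT)).2
    refine le_antisymm (le_trans (measure_mono hsub) (le_of_eq ?_)) zero_le
    apply measure_iUnion_null
    intro i
    by_cases hiT : i ∈ T
    · rw [if_pos hiT]; exact hnullT i hiT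
    · rw [if_neg hiT]; exact hnullNT i hiT
  -- G as a disjoint union of orthant pieces
  have hG_union : G = ⋃ S ∈ T.powerset, Pσ (σS S) := by
    ext x
    simp only [Set.mem_iUnion]
    constructor
    · intro hx
      refine ⟨T.filter (fun i => x i < 0), Finset.mem_powerset.2 (Finset.filter_subset _ _), ?_⟩
      rw [hPσ_mem]
      intro i
      constructor
      · intro hiT
        by_cases hneg : x i < 0
        · rw [hσSdef]
          simp only [Finset.mem_filter, hiT, hneg, and_self, if_pos]
          simp only [neg_mul, one_mul]
          linarith
        · have hne := (hx i).1 hiT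
          have hpos : 0 < x i := lt_of_le_of_ne (not_lt.1 hneg) (Ne.symm hne)
          rw [hσSdef]
          simp only [Finset.mem_filter]
          rw [if_neg (by tauto)]
          linarith
      · intro hiT; exact (hx i).2 hiT
    · rintro ⟨S, _, hx⟩
      rw [hPσ_mem] at hx
      intro i
      constructor
      · intro hiT
        have := (hx i).1 hiT
        intro h0
        rw [h0, mul_zero] at this
        exact lt_irrefl 0 this
      · intro hiT; exact (hx i).2 hiT
  have hG_disj : (↑T.powerset : Set (Finset (Fin n))).PairwiseDisjoint (fun S => Pσ (σS S)) := by
    intro S1 hS1 S2 hS2 hne12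
    rw [Function.onFun]
    rw [Set.disjoint_left]
    intro x hx1 hx2
    rw [hPσ_mem] at hx1 hx2
    have : ¬ (∀ i, i ∈ S1 ↔ i ∈ S2) := fun h => hne12 (Finset.ext h)
    push_neg at this
    obtain ⟨i, hi⟩ := this
    rw [Finset.mem_coe, Finset.mem_powerset] at hS1 hS2
    rcases hi with ⟨h1, h2⟩ | ⟨h1, h2⟩
    · have hiT : i ∈ T := hS1 h1
      have e1 := (hx1 i).1 hiT
      have e2 := (hx2 i).1 hiT
      rw [hσSdef] at e1 e2
      simp only [if_pos h1, if_neg h2, neg_mul, one_mul] at e1 e2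
      linarith
    · have hiT : i ∈ T := hS2 h2
      have e1 := (hx1 i).1 hiT
      have e2 := (hx2 i).1 hiT
      rw [hσSdef] at e1 e2
      simp only [if_neg h1, if_pos h2, neg_mul, one_mul] at e1 e2
      linarith
  -- unconditionality of the pieces
  have hpiece : ∀ (A : Set (Fin n → ℝ)), MeasurableSet A →
      (∀ S : Finset (Fin n), (fun x i => σS S i * x i) ⁻¹' A = A) →
      ∀ S ∈ T.powerset, ν (A ∩ Pσ (σS S)) = ν (A ∩ Pσ σ0) := by
    intro A hA hAinv S _
    have hpre : (fun x i => σS S i * x i) ⁻¹' (A ∩ Pσ σ0) = A ∩ Pσ (σS S) := by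
      rw [Set.preimage_inter, hAinv S]
      congr 1
      ext x
      rw [Set.mem_preimage, hPσ_mem, hPσ_mem]
      constructor
      · intro h i
        obtain ⟨h1, h2⟩ := h i
        constructor
        · intro hiT
          have := h1 hiT
          rw [hσ0def] at this
          simpa using this
        · intro hiT
          have := h2 hiT
          exact (mul_eq_zero.1 this).resolve_left (hσS_ne S i)
      · intro h i
        obtain ⟨h1, h2⟩ := h i
        constructor
        · intro hiT
          rw [hσ0def]
          simpa using h1 hiT
        · intro hiT
          simp only [h2 hiT, mul_zero]
    rw [← hpre]
    exact hsymm (σS S) (hσS_sign S) _ (hA.inter (hPσ_meas σ0))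
  -- decomposition of measures
  have hdecomp : ∀ (A : Set (Fin n → ℝ)), MeasurableSet A →
      (∀ S : Finset (Fin n), (fun x i => σS S i * x i) ⁻¹' A = A) →
      ν A = (2 ^ T.card : ℝ≥0∞) * ν (A ∩ Pσ σ0) := by
    intro A hA hAinv
    have h1 : ν A = ν (A ∩ G) := by
      have h2 : ν (A \ G) = 0 :=
        le_antisymm (le_trans (measure_mono (Set.diff_subset_compl A G)) (le_of_eq hGc)) zero_le
      rw [← measure_inter_add_diff A hG_meas, h2, add_zero]
    have h3 : A ∩ G = ⋃ S ∈ T.powerset, (A ∩ Pσ (σS S)) := by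
      rw [hG_union, Set.inter_iUnion₂]
    have h4 : ν (A ∩ G) = ∑ S ∈ T.powerset, ν (A ∩ Pσ (σS S)) := by
      rw [h3]
      apply measure_biUnion_finset
      · exact Set.PairwiseDisjoint.mono_on hG_disj
          (fun S _ => Set.inter_subset_right)
      · exact fun S _ => hA.inter (hPσ_meas _)
    have h5 : ∑ S ∈ T.powerset, ν (A ∩ Pσ (σS S)) = T.powerset.card • ν (A ∩ Pσ σ0) := by
      rw [Finset.sum_congr rfl (fun S hS => hpiece A hA hAinv S hS), Finset.sum_const]
    rw [h1, h4, h5, Finset.card_powerset, nsmul_eq_mul]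
    push_cast
    ring_nf
  -- invariance of the B sets and univ
  have hBinv : ∀ s (S : Finset (Fin n)), (fun x i => σS S i * x i) ⁻¹' (Bs s) = Bs s := by
    intro s S
    ext x
    rw [Set.mem_preimage, hBsdef]
    simp only [Set.mem_setOf_eq]
    rw [kthMax_uncond (σS S) (fun i => by rcases hσS_sign S i with h | h <;> rw [h] <;> norm_num) x]
  have huniv_inv : ∀ S : Finset (Fin n), (fun (x : Fin n → ℝ) (i : Fin n) => σS S i * x i) ⁻¹' (Set.univ : Set (Fin n → ℝ)) = Set.univ := by
    intro S
    ext z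
    simp
  -- decompositions
  have hBut := hdecomp (Bs (u * t)) (hBs_meas _) (hBinv (u * t))
  have hBt := hdecomp (Bs t) (hBs_meas _) (hBinv t)
  have huniv := hdecomp Set.univ MeasurableSet.univ huniv_inv
  -- real quantities
  set m : ℝ := (2 : ℝ) ^ T.card with hmdef
  have hm0 : (0:ℝ) < m := by positivity
  have hmne : ((2 : ℝ≥0∞) ^ T.card) ≠ ⊤ := by
    exact ENNReal.pow_ne_top (by norm_num)
  set βu : ℝ := (ν (Bs (u * t))).toReal with hβudef
  set βt : ℝ := (ν (Bs t)).toReal with hβtdef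
  set a' : ℝ := (ν (Bs (u * t) ∩ Pσ σ0)).toReal with ha'def
  set b' : ℝ := (ν (Bs t ∩ Pσ σ0)).toReal with hb'def
  set p' : ℝ := (ν (Pσ σ0)).toReal with hp'def
  have htoReal2 : ((2 : ℝ≥0∞) ^ T.card).toReal = m := by
    rw [hmdef, ENNReal.toReal_pow]
    norm_num
  have hβu_eq : βu = m * a' := by
    rw [hβudef, hBut, ENNReal.toReal_mul, htoReal2, ha'def]
  have hβt_eq : βt = m * b' := by
    rw [hβtdef, hBt, ENNReal.toReal_mul, htoReal2, hb'def]
  have hp'_eq : (1:ℝ) = m * p' := by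
    have h1 : (ν (Set.univ : Set (Fin n → ℝ))).toReal = 1 := by
      simp [measure_univ]
    rw [← h1, huniv, ENNReal.toReal_mul, htoReal2, hp'def, Set.univ_inter]
  -- the log-concavity step
  set l : ℝ := 1 / u with hldef
  have hl0 : 0 < l := by positivity
  have hl1 : l < 1 := by
    rw [hldef, div_lt_one hu0]; exact hu
  have hlc_step : a' ^ l * p' ^ (1 - l) ≤ b' := by
    apply lc_real ν hlc ((hBs_meas _).inter (hPσ_meas σ0)) (hPσ_meas σ0) hl0 hl1
    rintro x ⟨hxB, hxP⟩ y hyP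
    rw [hPσ_mem] at hxP hyP
    have hz : ∀ i, (l • x + (1 - l) • y) i = l * x i + (1 - l) * y i := by
      intro i; simp [smul_eq_mul]
    constructor
    · -- z ∈ Bs t
      rw [hBsdef]
      show t ≤ kthMax k (l • x + (1 - l) • y)
      rw [kthMax_ge_iff hk1 hkn]
      have hxB' : k ≤ (Finset.univ.filter (fun i => u * t ≤ |x i|)).card := by
        rw [← kthMax_ge_iff hk1 hkn]; exact hxB
      refine le_trans hxB' (Finset.card_le_card ?_)
      intro i hi
      rw [Finset.mem_filter] at hi ⊢
      refine ⟨Finset.mem_univ _, ?_⟩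
      obtain ⟨-, hxi⟩ := hi
      have hiT : i ∈ T := by
        by_contra hiT
        have := (hxP i).2 hiT
        rw [this] at hxi
        simp only [abs_zero] at hxi
        nlinarith
      have hxipos : 0 < x i := by
        have := (hxP i).1 hiT
        rw [hσ0def] at this; simpa using this
      have hyipos : 0 < y i := by
        have := (hyP i).1 hiT
        rw [hσ0def] at this; simpa using this
      have hxiv : x i = |x i| := (abs_of_pos hxipos).symm
      have hzi : t ≤ (l • x + (1 - l) • y) i := by
        rw [hz i]
        have h1 : l * (u * t) ≤ l * x i := by
          apply mul_le_mul_of_nonneg_left _ hl0.le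
          rw [hxiv]; exact hxi
        have h2 : l * (u * t) = t := by
          rw [hldef]; field_simp
        nlinarith [mul_pos (by linarith : (0:ℝ) < 1 - l) hyipos]
      have hzipos : 0 < (l • x + (1 - l) • y) i := lt_of_lt_of_le ht hzi
      rw [abs_of_pos hzipos]
      exact hzi
    · -- z ∈ Pσ σ0
      rw [hPσ_mem]
      intro i
      constructor
      · intro hiT
        have hx1 := (hxP i).1 hiT
        have hy1 := (hyP i).1 hiT
        rw [hσ0def] at hx1 hy1 ⊢
        simp only [one_mul] at hx1 hy1 ⊢
        rw [hz i]
        nlinarith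
      · intro hiT
        rw [hz i, (hxP i).2 hiT, (hyP i).2 hiT]
        ring
  -- final algebra
  have hβu0 : 0 ≤ βu := ENNReal.toReal_nonneg
  have hβt0 : 0 ≤ βt := ENNReal.toReal_nonneg
  have ha'0 : 0 ≤ a' := ENNReal.toReal_nonneg
  have hp'0 : 0 ≤ p' := ENNReal.toReal_nonneg
  have hkey : βu ^ l ≤ βt := by
    have h2 : p' = 1 / m := by
      rw [eq_div_iff (ne_of_gt hm0)]
      linarith [hp'_eq]
    have h4 : βu ^ l = m ^ l * a' ^ l := by
      rw [hβu_eq, Real.mul_rpow hm0.le ha'0]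
    have h5 : p' ^ (1 - l) = (m ^ (1 - l))⁻¹ := by
      rw [h2, one_div, Real.inv_rpow hm0.le]
    have h7 : m ^ l * m ^ (1 - l) = m := by
      rw [← Real.rpow_add hm0]; norm_num
    have hml1 : (0:ℝ) < m ^ (1 - l) := Real.rpow_pos_of_pos hm0 (1 - l)
    have hinv : m ^ (1 - l) * (m ^ (1 - l))⁻¹ = 1 := mul_inv_cancel₀ (ne_of_gt hml1)
    have h8 : m * (a' ^ l * p' ^ (1 - l)) = βu ^ l := by
      rw [h4, h5]
      linear_combination (m ^ l * a' ^ l) * hinv - (a' ^ l * (m ^ (1 - l))⁻¹) * h7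
    calc βu ^ l = m * (a' ^ l * p' ^ (1 - l)) := h8.symm
      _ ≤ m * b' := mul_le_mul_of_nonneg_left hlc_step hm0.le
      _ = βt := hβt_eq.symm
  -- conclude
  have hgoal : βu ≤ βt ^ u := by
    have hlu : l * u = 1 := by
      rw [hldef]
      exact one_div_mul_cancel (ne_of_gt hu0)
    calc βu = βu ^ (1:ℝ) := (Real.rpow_one βu).symm
      _ = (βu ^ l) ^ u := by rw [← hlu, Real.rpow_mul hβu0]
      _ ≤ βt ^ u := Real.rpow_le_rpow (Real.rpow_nonneg hβu0 l) hkey hu0.le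
  -- rewrite the goal in terms of ν
  have hg1 : {ω | u * t ≤ kthMax k (X ω)} = X ⁻¹' (Bs (u * t)) := rfl
  have hg2 : {ω | t ≤ kthMax k (X ω)} = X ⁻¹' (Bs t) := rfl
  rw [hg1, hg2, ← Measure.map_apply hmeas (hBs_meas _), ← Measure.map_apply hmeas (hBs_meas _)]
  exact hgoal
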